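/- Suppose (𝒳, S, γ, (Λ_a)_{a∈A}) is a spectral decomposition system for a Euclidean space 𝔥 with {Λ_a : a ∈ A} closed in L(𝒳,𝔥). Let D be a nonempty S-invariant subset of 𝒳, let x, y ∈ 𝒳, and let a ∈ A. Then y ∈ N_F(x;D) if and only if Λ_a y ∈ N_F(Λ_a x; γ⁻¹(D)). -/
import Mathlib


open Filter Topology Set Metric
open scoped RealInnerProductSpace

noncomputable section

/-- A spectral decomposition system `(𝒳, S, γ, (Λ_a)_{a ∈ A})` for the space `H`:
`S` acts on `𝒳` by linear isometries (via `act`), `γ : H → 𝒳` is the spectral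
mapping, each `Λ a : 𝒳 → H` is a linear isometry, and the axioms [A], [B], [C] hold,
with `τ` the `S`-invariant ordering mapping of axiom [A]. -/
structure SDS (𝒳 H : Type*) [NormedAddCommGroup 𝒳] [InnerProductSpace ℝ 𝒳]
    [NormedAddCommGroup H] [InnerProductSpace ℝ H]
    (S : Type*) [Group S] (A : Type*) where
  act : S →* (𝒳 ≃ₗᵢ[ℝ] 𝒳)
  γ : H → 𝒳
  Λ : A → 𝒳 →ₗᵢ[ℝ] H
  τ : 𝒳 → 𝒳
  τ_inv : ∀ (s : S) (x : 𝒳), τ (act s x) = τ x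
  τ_orbit : ∀ x : 𝒳, ∃ s : S, τ x = act s x
  γΛ : ∀ (a : A) (x : 𝒳), γ (Λ a x) = τ x
  decomp : ∀ X : H, ∃ a : A, X = Λ a (γ X)
  inner_le : ∀ X Y : H, ⟪X, Y⟫ ≤ ⟪γ X, γ Y⟫

variable {𝒳 H S A : Type*} [NormedAddCommGroup 𝒳] [InnerProductSpace ℝ 𝒳]
    [NormedAddCommGroup H] [InnerProductSpace ℝ H] [Group S]

/-- The set `{Λ_a : a ∈ A}`, regarded as a subset of the space `L(𝒳, H)` of
continuous linear maps with the operator norm. -/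
def SDS.LambdaSet (𝔖 : SDS 𝒳 H S A) : Set (𝒳 →L[ℝ] H) :=
  {L | ∃ a : A, L = (𝔖.Λ a).toContinuousLinearMap}

/-- `A_X = {a ∈ A : X = Λ_a (γ X)}`. -/
def SDS.AX (𝔖 : SDS 𝒳 H S A) (X : H) : Set A := {a | X = 𝔖.Λ a (𝔖.γ X)}

/-- The Fréchet normal cone to `D` at `x`: empty if `x ∉ D`, and otherwise the set of
`y` with `limsup_{z → x, z ∈ D \ {x}} ⟨z - x, y⟩ / ‖z - x‖ ≤ 0`, expressed in ε-δ form. -/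
def fNormal {E : Type*} [NormedAddCommGroup E] [InnerProductSpace ℝ E]
    (D : Set E) (x : E) : Set E :=
  {y | x ∈ D ∧ ∀ ε : ℝ, 0 < ε → ∃ δ : ℝ, 0 < δ ∧
    ∀ z ∈ D, ‖z - x‖ < δ → ⟪z - x, y⟫ ≤ ε * ‖z - x‖}

namespace SDSAux


/-- `c ≤ infDist x s` from pointwise bounds. -/
lemma le_infDist' {E : Type*} [NormedAddCommGroup E] {s : Set E} (hs : s.Nonempty)
    {c : ℝ} {x : E} (h : ∀ z ∈ s, c ≤ dist x z) : c ≤ infDist x s := by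
  by_contra hlt
  push_neg at hlt
  obtain ⟨z, hz, hdz⟩ := (infDist_lt_iff hs).1 hlt
  exact absurd (h z hz) (not_le.2 hdz)

/-- a ≤ b from a² ≤ b², a form convenient for norms. -/
lemma le_of_sq_le_sq {a b : ℝ} (ha : 0 ≤ a) (hb : 0 ≤ b) (h : a ^ 2 ≤ b ^ 2) : a ≤ b := by
  nlinarith

variable (𝔖 : SDS 𝒳 H S A)

lemma act_inv_act (s : S) (v : 𝒳) : 𝔖.act s⁻¹ (𝔖.act s v) = v := by
  have h : (𝔖.act s⁻¹ * 𝔖.act s) v = (𝔖.act (s⁻¹ * s)) v := by rw [map_mul]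
  simpa using h.symm

lemma act_act_inv (s : S) (v : 𝒳) : 𝔖.act s (𝔖.act s⁻¹ v) = v := by
  have := act_inv_act 𝔖 s⁻¹ v
  simpa using this

lemma inner_le_tau (a : A) (p q : 𝒳) : ⟪p, q⟫ ≤ ⟪𝔖.τ p, 𝔖.τ q⟫ := by
  have h := 𝔖.inner_le (𝔖.Λ a p) (𝔖.Λ a q)
  rw [𝔖.γΛ, 𝔖.γΛ] at h
  rwa [(𝔖.Λ a).inner_map_map] at h

lemma norm_tau (p : 𝒳) : ‖𝔖.τ p‖ = ‖p‖ := by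
  obtain ⟨s, hs⟩ := 𝔖.τ_orbit p
  rw [hs, (𝔖.act s).norm_map]

lemma tau_gamma (V : H) : 𝔖.τ (𝔖.γ V) = 𝔖.γ V := by
  obtain ⟨c, hc⟩ := 𝔖.decomp V
  have h : 𝔖.γ V = 𝔖.τ (𝔖.γ V) := by
    conv_lhs => rw [hc]
    rw [𝔖.γΛ]
  exact h.symm

lemma norm_gamma (V : H) : ‖𝔖.γ V‖ = ‖V‖ := by
  obtain ⟨c, hc⟩ := 𝔖.decomp V
  conv_rhs => rw [hc]
  rw [(𝔖.Λ c).norm_map]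

/-- γ is 1-Lipschitz. -/
lemma gamma_lip (V W : H) : ‖𝔖.γ V - 𝔖.γ W‖ ≤ ‖V - W‖ := by
  apply le_of_sq_le_sq (norm_nonneg _) (norm_nonneg _)
  rw [norm_sub_sq_real, norm_sub_sq_real, norm_gamma, norm_gamma]
  have := 𝔖.inner_le V W
  linarith

/-- τ is 1-Lipschitz (needs an index). -/
lemma tau_lip (a : A) (p q : 𝒳) : ‖𝔖.τ p - 𝔖.τ q‖ ≤ ‖p - q‖ := by
  apply le_of_sq_le_sq (norm_nonneg _) (norm_nonneg _)
  rw [norm_sub_sq_real, norm_sub_sq_real, norm_tau, norm_tau]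
  have := inner_le_tau 𝔖 a p q
  linarith

lemma tau_mem {D : Set 𝒳} (hDinv : ∀ (s : S), ∀ x ∈ D, 𝔖.act s x ∈ D) {v : 𝒳} (hv : v ∈ D) :
    𝔖.τ v ∈ D := by
  obtain ⟨s, hs⟩ := 𝔖.τ_orbit v
  rw [hs]; exact hDinv s v hv

/-- membership transfer -/
lemma mem_transfer {D : Set 𝒳} (hDinv : ∀ (s : S), ∀ x ∈ D, 𝔖.act s x ∈ D) (a : A) (v : 𝒳) :
    v ∈ D ↔ 𝔖.Λ a v ∈ 𝔖.γ ⁻¹' D := by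
  obtain ⟨s, hs⟩ := 𝔖.τ_orbit v
  constructor
  · intro hv
    simp only [Set.mem_preimage, 𝔖.γΛ, hs]
    exact hDinv s v hv
  · intro hv
    simp only [Set.mem_preimage, 𝔖.γΛ, hs] at hv
    have := hDinv s⁻¹ _ hv
    rwa [act_inv_act] at this

/-- The fundamental distance identity. -/
lemma infDist_transfer {D : Set 𝒳} (hD : D.Nonempty)
    (hDinv : ∀ (s : S), ∀ x ∈ D, 𝔖.act s x ∈ D) (a : A) (v : 𝒳) :
    infDist (𝔖.Λ a v) (𝔖.γ ⁻¹' D) = infDist v D := by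
  have hpre : (𝔖.γ ⁻¹' D).Nonempty := by
    obtain ⟨z, hz⟩ := hD
    refine ⟨𝔖.Λ a z, ?_⟩
    simp only [Set.mem_preimage, 𝔖.γΛ]
    exact tau_mem 𝔖 hDinv hz
  apply le_antisymm
  · -- ≤ : for each z ∈ D produce a preimage point at distance ≤ dist v z
    apply le_infDist' hD
    intro z hz
    obtain ⟨c, hc⟩ := 𝔖.decomp (𝔖.Λ a v)
    have hW : 𝔖.Λ c (𝔖.τ z) ∈ 𝔖.γ ⁻¹' D := by
      simp only [Set.mem_preimage, 𝔖.γΛ]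
      have h1 : 𝔖.τ (𝔖.τ z) = 𝔖.τ z := by
        have : 𝔖.τ z = 𝔖.γ (𝔖.Λ a z) := (𝔖.γΛ a z).symm
        rw [this, tau_gamma]
      rw [h1]
      exact tau_mem 𝔖 hDinv hz
    have hd : dist (𝔖.Λ a v) (𝔖.Λ c (𝔖.τ z)) ≤ dist v z := by
      rw [dist_eq_norm, dist_eq_norm]
      calc ‖𝔖.Λ a v - 𝔖.Λ c (𝔖.τ z)‖
          = ‖𝔖.Λ c (𝔖.γ (𝔖.Λ a v)) - 𝔖.Λ c (𝔖.τ z)‖ := by rw [← hc]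
        _ = ‖𝔖.γ (𝔖.Λ a v) - 𝔖.τ z‖ := by rw [← map_sub, (𝔖.Λ c).norm_map]
        _ = ‖𝔖.τ v - 𝔖.τ z‖ := by rw [𝔖.γΛ]
        _ ≤ ‖v - z‖ := tau_lip 𝔖 a v z
    exact le_trans (infDist_le_dist_of_mem hW) hd
  · -- ≥ : for each W ∈ γ⁻¹D produce a D point at distance ≤ dist (Λ a v) W
    apply le_infDist' hpre
    intro W hW
    obtain ⟨s, hs⟩ := 𝔖.τ_orbit v
    have hzmem : 𝔖.act s⁻¹ (𝔖.γ W) ∈ D := hDinv s⁻¹ _ hW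
    have hd : dist v (𝔖.act s⁻¹ (𝔖.γ W)) ≤ dist (𝔖.Λ a v) W := by
      rw [dist_eq_norm, dist_eq_norm]
      have e1 : ‖v - 𝔖.act s⁻¹ (𝔖.γ W)‖ = ‖𝔖.τ v - 𝔖.γ W‖ := by
        rw [hs]
        calc ‖v - 𝔖.act s⁻¹ (𝔖.γ W)‖
            = ‖𝔖.act s (v - 𝔖.act s⁻¹ (𝔖.γ W))‖ := ((𝔖.act s).norm_map _).symm
          _ = ‖𝔖.act s v - 𝔖.γ W‖ := by rw [map_sub, act_act_inv]
      rw [e1, ← 𝔖.γΛ a v]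
      exact gamma_lip 𝔖 _ _
    exact le_trans (infDist_le_dist_of_mem hzmem) hd

variable {E : Type*} [NormedAddCommGroup E] [InnerProductSpace ℝ E]


lemma expand_sq (x y z : E) (t : ℝ) (ht : 0 < t) :
    ‖x + t • y - z‖ ^ 2 = (t * ‖y‖) ^ 2 - 2 * (t * ⟪z - x, y⟫) + ‖z - x‖ ^ 2 := by
  have h1 : x + t • y - z = t • y - (z - x) := by abel
  rw [h1, norm_sub_sq_real, real_inner_smul_left, norm_smul, Real.norm_eq_abs,
    abs_of_pos ht, real_inner_comm]

/-- From the Fréchet normal cone, lower bound on `infDist (x + t•y) D`. -/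
lemma dist_lower_of_fNormal {D : Set E} (hD : D.Nonempty) {x y : E}
    (h : y ∈ fNormal D x) {ε : ℝ} (hε : 0 < ε) :
    ∃ T : ℝ, 0 < T ∧ ∀ t : ℝ, 0 < t → t < T → (‖y‖ - ε) * t ≤ infDist (x + t • y) D := by
  by_cases hye : ‖y‖ ≤ ε
  · refine ⟨1, one_pos, fun t ht _ => ?_⟩
    have : (‖y‖ - ε) * t ≤ 0 := mul_nonpos_of_nonpos_of_nonneg (by linarith) ht.le
    exact this.trans (infDist_nonneg)
  push_neg at hye
  obtain ⟨δ, hδpos, hδ⟩ := h.2 ε hε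
  refine ⟨δ / (2 * ‖y‖ + 1), by positivity, fun t ht htT => ?_⟩
  apply le_infDist' hD
  intro z hz
  rw [dist_eq_norm]
  by_cases hcase : ‖z - x‖ < δ
  · -- near points: use the normal cone inequality
    have hin : ⟪z - x, y⟫ ≤ ε * ‖z - x‖ := hδ z hz hcase
    have hL0 : 0 ≤ (‖y‖ - ε) * t := mul_nonneg (by linarith) ht.le
    have hsq : ((‖y‖ - ε) * t) ^ 2 ≤ ‖x + t • y - z‖ ^ 2 := by
      rw [expand_sq x y z t ht]
      nlinarith [sq_nonneg (‖z - x‖ - t * ε), mul_pos ht hε, norm_nonneg (z - x)]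
    nlinarith [norm_nonneg (x + t • y - z)]
  · -- far points
    push_neg at hcase
    have htri : ‖z - x‖ ≤ ‖x + t • y - z‖ + t * ‖y‖ := by
      have h1 : z - x = -(x + t • y - z) + t • y := by abel
      calc ‖z - x‖ = ‖-(x + t • y - z) + t • y‖ := by rw [← h1]
        _ ≤ ‖-(x + t • y - z)‖ + ‖t • y‖ := norm_add_le _ _
        _ = ‖x + t • y - z‖ + t * ‖y‖ := by
            rw [norm_neg, norm_smul, Real.norm_eq_abs, abs_of_pos ht]
    have hδb : t * (2 * ‖y‖ + 1) < δ := by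
      rw [lt_div_iff₀ (by positivity)] at htT
      linarith
    nlinarith [norm_nonneg y]


/-- Converse: distance lower bounds imply Fréchet normality. -/
lemma fNormal_of_dist_lower {D : Set E} {x y : E} (hx : x ∈ D)
    (h : ∀ ε : ℝ, 0 < ε → ∃ T : ℝ, 0 < T ∧ ∀ t : ℝ, 0 < t → t < T →
      (‖y‖ - ε) * t ≤ infDist (x + t • y) D) :
    y ∈ fNormal D x := by
  refine ⟨hx, fun ε hε => ?_⟩
  have hden : (0:ℝ) < 2 * (‖y‖ + 1) := by positivity
  set ε' : ℝ := min ε (ε ^ 2 / (2 * (‖y‖ + 1))) with hε'def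
  have hε'pos : 0 < ε' := lt_min hε (by positivity)
  have hε'le : ε' ≤ ε := min_le_left _ _
  have hε'le2 : ε' ≤ ε ^ 2 / (2 * (‖y‖ + 1)) := min_le_right _ _
  obtain ⟨T, hT, hTh⟩ := h ε' hε'pos
  refine ⟨T * ε, by positivity, fun z hz hρ => ?_⟩
  set ρ : ℝ := ‖z - x‖ with hρdef
  have hρ0 : 0 ≤ ρ := norm_nonneg _
  rcases eq_or_lt_of_le hρ0 with hρz | hρpos
  · -- ρ = 0, so z = x
    have : z - x = 0 := by
      rw [← norm_eq_zero]; exact hρz.symm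
    rw [this]
    simpa using mul_nonneg hε.le hρ0
  by_cases hy' : ‖y‖ < ε'
  · -- tiny y
    have := real_inner_le_norm (z - x) y
    have : ⟪z - x, y⟫ ≤ ρ * ‖y‖ := this
    nlinarith
  push_neg at hy'
  set t : ℝ := ρ / ε with htdef
  have ht : 0 < t := div_pos hρpos hε
  have htT : t < T := by
    rw [htdef, div_lt_iff₀ hε]
    linarith
  have hlow : (‖y‖ - ε') * t ≤ infDist (x + t • y) D := hTh t ht htT
  have hdistle : infDist (x + t • y) D ≤ ‖x + t • y - z‖ :=
    (infDist_le_dist_of_mem hz).trans_eq (dist_eq_norm _ _)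
  have hL0 : 0 ≤ (‖y‖ - ε') * t := mul_nonneg (by linarith) ht.le
  have hsq : ((‖y‖ - ε') * t) ^ 2 ≤ ‖x + t • y - z‖ ^ 2 := by
    have hB := hlow.trans hdistle
    nlinarith
  rw [expand_sq x y z t ht, ← hρdef] at hsq
  -- deduce ⟪z-x,y⟫ ≤ t ε' ‖y‖ + ρ²/(2t) ≤ ε ρ
  have hkey : 2 * t * ⟪z - x, y⟫ ≤ 2 * t ^ 2 * (ε' * ‖y‖) + ρ ^ 2 := by
    nlinarith [sq_nonneg (t * ε'), hsq]
  have hteq : t * ε = ρ := by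
    rw [htdef]; field_simp
  have hε'y : ε' * ‖y‖ ≤ ε ^ 2 / 2 := by
    calc ε' * ‖y‖ ≤ ε ^ 2 / (2 * (‖y‖ + 1)) * ‖y‖ := by
          apply mul_le_mul_of_nonneg_right hε'le2 (norm_nonneg y)
      _ ≤ ε ^ 2 / 2 := by
          rw [div_mul_eq_mul_div, div_le_div_iff₀ (by positivity) (by norm_num)]
          nlinarith [norm_nonneg y, sq_nonneg ε]
  -- now finish: ⟪z-x,y⟫ ≤ t ε'‖y‖ + ρ²/(2t); with t = ρ/ε
  have : ⟪z - x, y⟫ ≤ ε * ρ := by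
    have h2t : 0 < 2 * t := by linarith
    -- from hkey: ⟪z-x,y⟫ ≤ t*(ε'*‖y‖) + ρ^2/(2*t)
    have hρt : ρ = t * ε := hteq.symm
    nlinarith [mul_pos ht ht]
  exact this.trans_eq (mul_comm ε ρ ▸ rfl)


end SDSAux

/-- For a nonempty `S`-invariant `D ⊆ 𝒳`, `x, y ∈ 𝒳` and `a ∈ A`:
`y ∈ N_F(x; D)` iff `Λ_a y ∈ N_F(Λ_a x; γ⁻¹(D))`. -/
theorem frechet_normal_lambda_iff
    [FiniteDimensional ℝ 𝒳] [FiniteDimensional ℝ H]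
    (𝔖 : SDS 𝒳 H S A) (hcl : IsClosed 𝔖.LambdaSet)
    (D : Set 𝒳) (hD : D.Nonempty) (hDinv : ∀ (s : S), ∀ x ∈ D, 𝔖.act s x ∈ D)
    (x y : 𝒳) (a : A) :
    y ∈ fNormal D x ↔ 𝔖.Λ a y ∈ fNormal (𝔖.γ ⁻¹' D) (𝔖.Λ a x) := by
  obtain ⟨z0, hz0⟩ := id hD
  have hpre : (𝔖.γ ⁻¹' D).Nonempty := by
    refine ⟨𝔖.Λ a z0, ?_⟩
    simp only [Set.mem_preimage, 𝔖.γΛ]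
    exact SDSAux.tau_mem 𝔖 hDinv hz0
  have hmap : ∀ t : ℝ, 𝔖.Λ a x + t • 𝔖.Λ a y = 𝔖.Λ a (x + t • y) := fun t => by
    rw [map_add, map_smul]
  have hnormy : ‖𝔖.Λ a y‖ = ‖y‖ := (𝔖.Λ a).norm_map y
  constructor
  · intro hy
    apply SDSAux.fNormal_of_dist_lower ((SDSAux.mem_transfer 𝔖 hDinv a x).1 hy.1)
    intro ε hε
    obtain ⟨T, hT, hTh⟩ := SDSAux.dist_lower_of_fNormal hD hy hε
    refine ⟨T, hT, fun t ht htT => ?_⟩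
    rw [hnormy, hmap t, SDSAux.infDist_transfer 𝔖 hD hDinv a]
    exact hTh t ht htT
  · intro hY
    apply SDSAux.fNormal_of_dist_lower ((SDSAux.mem_transfer 𝔖 hDinv a x).2 hY.1)
    intro ε hε
    obtain ⟨T, hT, hTh⟩ := SDSAux.dist_lower_of_fNormal hpre hY hε
    refine ⟨T, hT, fun t ht htT => ?_⟩
    have h2 := hTh t ht htT
    rwa [hnormy, hmap t, SDSAux.infDist_transfer 𝔖 hD hDinv a] at h2
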